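/- Let T be a ŵ_p-shortest path tree in G, let G̃ be the model graph whose vertices are r and all endpoints s_1,t_1,...,s_k,t_k of priceable edges, with the priceable edges themselves, plus non-priceable edges from r to every other vertex and from each t_i to each s_j and t_j (j ≠ i) weighted by d_∞ (the distance in G − E_P). Let T̃ be a ŵ_p-shortest path tree in G̃. Then for every priceable edge e_i and endpoint x ∈ {s_i, t_i}, the set of priceable edges on the r-to-x path in T equals the set of priceable edges on the r-to-x path in T̃; consequently T and T̃ have the same reduced tree. -/

import Mathlib

/-- A directed graph: a type of edges with source and target maps. -/
structure Dgraph (V : Type) (E : Type) where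
  src : E → V
  tgt : E → V

/-- `IsWalk G u v π`: the list of edges `π` forms a walk from `u` to `v` in `G`. -/
def IsWalk {V E : Type} (G : Dgraph V E) : V → V → List E → Prop
  | u, v, [] => u = v
  | u, v, e :: es => G.src e = u ∧ IsWalk G (G.tgt e) v es

/-- A path is a walk without repeated edges. -/
def IsPath {V E : Type} (G : Dgraph V E) (u v : V) (π : List E) : Prop :=
  IsWalk G u v π ∧ π.Nodup

/-- Total weight of a list of edges under the weight function `w`. -/
def wval {E : Type} (w : E → ℝ) (π : List E) : ℝ := (π.map w).sum

/-- Total price of the priceable edges (those in `EP`) along `π`. -/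
def pval {E : Type} [DecidableEq E] (p : E → ℝ) (EP : Finset E) (π : List E) : ℝ :=
  ((π.filter (· ∈ EP)).map p).sum

/-- `χ(π) = Σ_{e_i ∈ π ∩ E_P} 2^{idx e_i}`. -/
def chival {E : Type} [DecidableEq E] (EP : Finset E) (idx : E → ℕ) (π : List E) : ℝ :=
  ((π.filter (· ∈ EP)).map (fun e => (2 : ℝ) ^ idx e)).sum

/-- The weight function `w_p`: price `p e` on priceable edges, fixed cost `c e` otherwise. -/
def wp {E : Type} [DecidableEq E] (c p : E → ℝ) (EP : Finset E) (e : E) : ℝ :=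
  if e ∈ EP then p e else c e

/-- Strict lexicographic order on `ℝ × ℝ × ℝ`. -/
def lexLt (a b : ℝ × ℝ × ℝ) : Prop :=
  a.1 < b.1 ∨ (a.1 = b.1 ∧ (a.2.1 < b.2.1 ∨ (a.2.1 = b.2.1 ∧ a.2.2 < b.2.2)))

/-- Non-strict lexicographic order on `ℝ × ℝ × ℝ`. -/
def lexLe (a b : ℝ × ℝ × ℝ) : Prop := lexLt a b ∨ a = b

/-- The composite weight `ŵ_p(π) = (w_p(π), -p(π), -χ(π))`. -/
def hatw {E : Type} [DecidableEq E] (c p : E → ℝ) (EP : Finset E) (idx : E → ℕ)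
    (π : List E) : ℝ × ℝ × ℝ :=
  (wval (wp c p EP) π, -(pval p EP π), -(chival EP idx π))

/-- `T` is a `ŵ_p`-shortest path tree from `r`: for every vertex `v`, `T v` is a path from
`r` to `v` that is lexicographically minimal with respect to `ŵ_p` among all such paths. -/
def IsHatSPT {V E : Type} [DecidableEq E] (G : Dgraph V E) (r : V)
    (c p : E → ℝ) (EP : Finset E) (idx : E → ℕ) (T : V → List E) : Prop :=
  ∀ v, IsPath G r v (T v) ∧
    ∀ π, IsPath G r v π → lexLe (hatw c p EP idx (T v)) (hatw c p EP idx π)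

/-- `T` is a shortest path tree from `r` with respect to `w_p`. -/
def IsSPT {V E : Type} [DecidableEq E] (G : Dgraph V E) (r : V)
    (c p : E → ℝ) (EP : Finset E) (T : V → List E) : Prop :=
  ∀ v, IsPath G r v (T v) ∧
    ∀ π, IsPath G r v π → wval (wp c p EP) (T v) ≤ wval (wp c p EP) π

/-- The last priceable edge along `π` (if any). -/
def lastP {E : Type} [DecidableEq E] (EP : Finset E) (π : List E) : Option E :=
  (π.filter (· ∈ EP)).getLast?

/-- `u` reaches `v` in `G − E_P` (by a walk avoiding priceable edges). -/
def Reaches {V E : Type} (G : Dgraph V E) (EP : Finset E) (u v : V) : Prop :=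
  ∃ π, IsWalk G u v π ∧ ∀ e ∈ π, e ∉ EP

/-- The model graph `G̃`: its edges are the priceable edges `e_1, …, e_k` together with
auxiliary edges given by ordered pairs of vertices. -/
def modelG {V E : Type} (G : Dgraph V E) (k : ℕ) (pe : Fin k → E) :
    Dgraph V (Fin k ⊕ (V × V)) where
  src := fun e => match e with | .inl i => G.src (pe i) | .inr q => q.1
  tgt := fun e => match e with | .inl i => G.tgt (pe i) | .inr q => q.2

/-- The auxiliary edges actually present in the model graph: from `r` to any endpoint of a
priceable edge, and from each `t_i` to `s_j` and `t_j` for `j ≠ i`; only pairs connected in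
`G − E_P` (finite `d_∞`) are present. -/
def allowedM {V E : Type} (G : Dgraph V E) (EP : Finset E) (r : V) (k : ℕ)
    (pe : Fin k → E) : Fin k ⊕ (V × V) → Prop
  | .inl _ => True
  | .inr q => Reaches G EP q.1 q.2 ∧
      ((q.1 = r ∧ ∃ j : Fin k, q.2 = G.src (pe j) ∨ q.2 = G.tgt (pe j)) ∨
        (∃ i j : Fin k, i ≠ j ∧ q.1 = G.tgt (pe i) ∧
          (q.2 = G.src (pe j) ∨ q.2 = G.tgt (pe j))))

namespace SPX

lemma isWalk_append {V E : Type} (G : Dgraph V E) (u v : V) (xs ys : List E) :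
    IsWalk G u v (xs ++ ys) ↔ ∃ m, IsWalk G u m xs ∧ IsWalk G m v ys := by
  induction xs generalizing u with
  | nil => simp [IsWalk]
  | cons e es ih => simp [IsWalk, ih, and_assoc]

lemma wval_nil {E : Type} (w : E → ℝ) : wval w ([] : List E) = 0 := rfl

lemma wval_cons {E : Type} (w : E → ℝ) (e : E) (l : List E) :
    wval w (e :: l) = w e + wval w l := by simp [wval]

lemma wval_append {E : Type} (w : E → ℝ) (a b : List E) :
    wval w (a ++ b) = wval w a + wval w b := by simp [wval]

lemma pval_cons {E : Type} [DecidableEq E] (p : E → ℝ) (EP : Finset E) (e : E) (l : List E) :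
    pval p EP (e :: l) = (if e ∈ EP then p e else 0) + pval p EP l := by
  by_cases h : e ∈ EP <;> simp [pval, List.filter_cons, h]

lemma pval_append {E : Type} [DecidableEq E] (p : E → ℝ) (EP : Finset E) (a b : List E) :
    pval p EP (a ++ b) = pval p EP a + pval p EP b := by simp [pval]

lemma chival_cons {E : Type} [DecidableEq E] (EP : Finset E) (idx : E → ℕ) (e : E) (l : List E) :
    chival EP idx (e :: l) = (if e ∈ EP then (2:ℝ) ^ idx e else 0) + chival EP idx l := by
  by_cases h : e ∈ EP <;> simp [chival, List.filter_cons, h]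

lemma chival_append {E : Type} [DecidableEq E] (EP : Finset E) (idx : E → ℕ) (a b : List E) :
    chival EP idx (a ++ b) = chival EP idx a + chival EP idx b := by simp [chival]

lemma wval_nonneg {E : Type} (w : E → ℝ) (l : List E) (h : ∀ e ∈ l, 0 ≤ w e) :
    0 ≤ wval w l := by
  induction l with
  | nil => simp [wval]
  | cons e es ih =>
    rw [wval_cons]
    have := h e (by simp)
    have := ih (fun e' he' => h e' (by simp [he']))
    linarith

lemma wval_pos_of_mem {E : Type} (w : E → ℝ) (l : List E) (h : ∀ e ∈ l, 0 ≤ w e)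
    (e : E) (he : e ∈ l) (hpos : 0 < w e) : 0 < wval w l := by
  induction l with
  | nil => simp at he
  | cons a as ih =>
    rw [wval_cons]
    rcases List.mem_cons.mp he with h1 | h1
    · subst h1
      have := wval_nonneg w as (fun e' he' => h e' (by simp [he']))
      linarith
    · have := ih (fun e' he' => h e' (by simp [he'])) h1
      have := h a (by simp)
      linarith

lemma wval_congr {E : Type} (w w' : E → ℝ) (l : List E) (h : ∀ e ∈ l, w e = w' e) :
    wval w l = wval w' l := by
  induction l with
  | nil => rfl
  | cons a as ih =>
    rw [wval_cons, wval_cons, h a (by simp), ih (fun e he => h e (by simp [he]))]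

lemma pval_eq_zero {E : Type} [DecidableEq E] (p : E → ℝ) (EP : Finset E) (l : List E)
    (h : ∀ e ∈ l, e ∉ EP) : pval p EP l = 0 := by
  have : l.filter (· ∈ EP) = [] := by
    apply List.filter_eq_nil_iff.mpr; intro e he; simpa using h e he
  simp [pval, this]

lemma chival_eq_zero {E : Type} [DecidableEq E] (EP : Finset E) (idx : E → ℕ) (l : List E)
    (h : ∀ e ∈ l, e ∉ EP) : chival EP idx l = 0 := by
  have : l.filter (· ∈ EP) = [] := by
    apply List.filter_eq_nil_iff.mpr; intro e he; simpa using h e he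
  simp [chival, this]

lemma lexLe_fst {a b : ℝ × ℝ × ℝ} (h : lexLe a b) : a.1 ≤ b.1 := by
  rcases h with (h | ⟨h1, h2⟩) | h
  · exact le_of_lt h
  · exact le_of_eq h1
  · exact le_of_eq (by rw [h])

lemma lexLe_not_lt_fst {a b : ℝ × ℝ × ℝ} (h : lexLe a b) (h2 : b.1 < a.1) : False :=
  absurd (lexLe_fst h) (not_le.mpr h2)

lemma lexLe_rest {a b : ℝ × ℝ × ℝ} (h : lexLe a b) (hfst : a.1 = b.1) :
    a.2.1 < b.2.1 ∨ (a.2.1 = b.2.1 ∧ a.2.2 ≤ b.2.2) := by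
  rcases h with (h | ⟨h1, h2 | ⟨h2, h3⟩⟩) | h
  · exact absurd hfst (ne_of_lt h)
  · exact Or.inl h2
  · exact Or.inr ⟨h2, le_of_lt h3⟩
  · exact Or.inr ⟨by rw [h], by rw [h]⟩

end SPX
namespace SPX

lemma exists_dup_decomp {E : Type} : ∀ (l : List E), ¬ l.Nodup →
    ∃ (a : List E) (e : E) (b : List E) (c : List E), l = a ++ (e :: (b ++ (e :: c))) := by
  intro l
  induction l with
  | nil => intro h; exact absurd List.nodup_nil h
  | cons x xs ih =>
    intro h
    by_cases hx : x ∈ xs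
    · obtain ⟨b, c, rfl⟩ := List.append_of_mem hx
      exact ⟨[], x, b, c, rfl⟩
    · have : ¬ xs.Nodup := fun hn => h (List.nodup_cons.mpr ⟨hx, hn⟩)
      obtain ⟨a, e, b, c, rfl⟩ := ih this
      exact ⟨x :: a, e, b, c, rfl⟩

lemma dedup_walk {V E : Type} [DecidableEq E] (G : Dgraph V E) (w : E → ℝ)
    (p : E → ℝ) (EP : Finset E) (idx : E → ℕ) :
    ∀ (n : ℕ) (π : List E), π.length ≤ n → ∀ (u v : V), IsWalk G u v π →
      (∀ e ∈ π, 0 ≤ w e) → (∀ e ∈ π, e ∈ EP → 0 < w e) →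
      ∃ π', IsPath G u v π' ∧ (∀ e ∈ π', e ∈ π) ∧ wval w π' ≤ wval w π ∧
        (wval w π' < wval w π ∨
          (pval p EP π' = pval p EP π ∧ chival EP idx π' = chival EP idx π)) := by
  intro n
  induction n with
  | zero =>
    intro π hlen u v hw _ _
    have : π = [] := List.length_eq_zero_iff.mp (Nat.le_zero.mp hlen)
    subst this
    exact ⟨[], ⟨hw, List.nodup_nil⟩, by simp, le_refl _, Or.inr ⟨rfl, rfl⟩⟩
  | succ n ih =>
    intro π hlen u v hw h0 hP
    by_cases hnd : π.Nodup
    · exact ⟨π, ⟨hw, hnd⟩, fun e he => he, le_refl _, Or.inr ⟨rfl, rfl⟩⟩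
    obtain ⟨a, e, b, c, rfl⟩ := exists_dup_decomp _ hnd
    -- walk decomposition
    obtain ⟨m, hwa, hwrest⟩ := (isWalk_append G u v a _).mp hw
    obtain ⟨hsrc, hwrest2⟩ : G.src e = m ∧ IsWalk G (G.tgt e) v (b ++ (e :: c)) := hwrest
    obtain ⟨m2, hwb, hwrest3⟩ := (isWalk_append G _ v b _).mp hwrest2
    obtain ⟨hsrc2, hwc⟩ : G.src e = m2 ∧ IsWalk G (G.tgt e) v c := hwrest3
    -- shortcut walk
    have hw' : IsWalk G u v (a ++ (e :: c)) :=
      (isWalk_append G u v a _).mpr ⟨m, hwa, hsrc, hwc⟩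
    have hlen' : (a ++ (e :: c)).length ≤ n := by
      have h1 : (a ++ (e :: (b ++ (e :: c)))).length ≤ n + 1 := hlen
      simp [List.length_append] at h1 ⊢
      omega
    have hmem : ∀ x ∈ a ++ (e :: c), x ∈ a ++ (e :: (b ++ (e :: c))) := by
      intro x hx
      simp at hx ⊢
      tauto
    obtain ⟨π', hpath, hsub, hle, hdisj⟩ := ih (a ++ (e :: c)) hlen' u v hw'
      (fun x hx => h0 x (hmem x hx)) (fun x hx => hP x (hmem x hx))
    refine ⟨π', hpath, fun x hx => hmem x (hsub x hx), ?_, ?_⟩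
    · -- weight comparison
      have hb0 : 0 ≤ wval w b := wval_nonneg w b (fun x hx => h0 x (by simp [hx]))
      have he0 : 0 ≤ w e := h0 e (by simp)
      have hwsplit : wval w (a ++ (e :: (b ++ (e :: c)))) =
          wval w (a ++ (e :: c)) + (wval w b + w e) := by
        simp [wval_append, wval_cons]; ring
      rw [hwsplit]; linarith
    · by_cases hEP : e ∈ EP ∨ ∃ x ∈ b, x ∈ EP
      · -- strictly smaller
        left
        have hpos : 0 < wval w b + w e := by
          rcases hEP with h1 | ⟨x, hxb, hxEP⟩
          · have := hP e (by simp) h1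
            have := wval_nonneg w b (fun y hy => h0 y (by simp [hy]))
            linarith
          · have := wval_pos_of_mem w b (fun y hy => h0 y (by simp [hy])) x hxb
              (hP x (by simp [hxb]) hxEP)
            have := h0 e (by simp)
            linarith
        have hwsplit : wval w (a ++ (e :: (b ++ (e :: c)))) =
            wval w (a ++ (e :: c)) + (wval w b + w e) := by
          simp [wval_append, wval_cons]; ring
        rw [hwsplit]; linarith
      · -- pval/chival preserved
        push_neg at hEP
        obtain ⟨heEP, hbEP⟩ := hEP
        have hpvb : pval p EP b = 0 := pval_eq_zero p EP b hbEP
        have hcvb : chival EP idx b = 0 := chival_eq_zero EP idx b hbEP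
        have hpv : pval p EP (a ++ (e :: (b ++ (e :: c)))) = pval p EP (a ++ (e :: c)) := by
          simp [pval_append, pval_cons, hpvb, heEP]
        have hcv : chival EP idx (a ++ (e :: (b ++ (e :: c)))) = chival EP idx (a ++ (e :: c)) := by
          simp [chival_append, chival_cons, hcvb, heEP]
        rcases hdisj with h1 | ⟨h2, h3⟩
        · left
          have hb0 : 0 ≤ wval w b := wval_nonneg w b (fun x hx => h0 x (by simp [hx]))
          have he0 : 0 ≤ w e := h0 e (by simp)
          have hwsplit : wval w (a ++ (e :: (b ++ (e :: c)))) =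
              wval w (a ++ (e :: c)) + (wval w b + w e) := by
            simp [wval_append, wval_cons]; ring
          rw [hwsplit]; linarith
        · right
          exact ⟨by rw [h2, hpv], by rw [h3, hcv]⟩

lemma split_first_priceable {E : Type} [DecidableEq E] (EP : Finset E) :
    ∀ (l : List E), (∃ e ∈ l, e ∈ EP) →
      ∃ (seg : List E) (e : E) (rest : List E),
        l = seg ++ e :: rest ∧ (∀ x ∈ seg, x ∉ EP) ∧ e ∈ EP := by
  intro l
  induction l with
  | nil => rintro ⟨e, he, _⟩; simp at he
  | cons a as ih =>
    intro h
    by_cases ha : a ∈ EP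
    · exact ⟨[], a, as, rfl, by simp, ha⟩
    · obtain ⟨e, he, heEP⟩ := h
      have : e ∈ as := by
        rcases List.mem_cons.mp he with h1 | h1
        · exact absurd (h1 ▸ heEP) ha
        · exact h1
      obtain ⟨seg, e', rest, rfl, hseg, he'⟩ := ih ⟨e, this, heEP⟩
      exact ⟨a :: seg, e', rest, rfl, by
        intro x hx
        rcases List.mem_cons.mp hx with h1 | h1
        · exact h1 ▸ ha
        · exact hseg x h1, he'⟩

end SPX
namespace SPX

lemma range_sum_two_pow : ∀ n : ℕ, ∑ i ∈ Finset.range n, (2:ℕ)^i = 2^n - 1 := by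
  intro n
  induction n with
  | zero => simp
  | succ m ihm =>
    rw [Finset.sum_range_succ, ihm]
    have : 1 ≤ (2:ℕ)^m := Nat.one_le_two_pow
    omega

lemma sum_two_pow_lt (n : ℕ) (s : Finset ℕ) (hs : ∀ i ∈ s, i < n) :
    ∑ i ∈ s, (2:ℕ)^i < 2^n := by
  have hsub : s ⊆ Finset.range n := fun i hi => Finset.mem_range.mpr (hs i hi)
  calc ∑ i ∈ s, (2:ℕ)^i ≤ ∑ i ∈ Finset.range n, 2^i :=
        Finset.sum_le_sum_of_subset hsub
    _ < 2^n := by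
        rw [range_sum_two_pow]
        have : 1 ≤ (2:ℕ)^n := Nat.one_le_two_pow
        omega

lemma two_pow_finset_inj_nat : ∀ (n : ℕ) (s t : Finset ℕ), (∀ i ∈ s, i < n) → (∀ i ∈ t, i < n) →
    ∑ i ∈ s, (2:ℕ)^i = ∑ i ∈ t, (2:ℕ)^i → s = t := by
  intro n
  induction n with
  | zero =>
    intro s t hs ht _
    have : s = ∅ := Finset.eq_empty_of_forall_notMem (fun i hi => absurd (hs i hi) (by omega))
    have ht' : t = ∅ := Finset.eq_empty_of_forall_notMem (fun i hi => absurd (ht i hi) (by omega))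
    rw [this, ht']
  | succ n ih =>
    intro s t hs ht heq
    have key : ∀ (a b : Finset ℕ), (∀ i ∈ a, i < n+1) → (∀ i ∈ b, i < n+1) →
        ∑ i ∈ a, (2:ℕ)^i = ∑ i ∈ b, (2:ℕ)^i → n ∈ a → n ∈ b := by
      intro a b ha hb hab hna
      by_contra hnb
      have hblt : ∀ i ∈ b, i < n := by
        intro i hi
        have := hb i hi
        rcases Nat.lt_succ_iff_lt_or_eq.mp this with h | h
        · exact h
        · exact absurd (h ▸ hi) hnb
      have h1 : (2:ℕ)^n ≤ ∑ i ∈ a, 2^i := Finset.single_le_sum (fun i _ => Nat.zero_le _) hna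
      have h2 : ∑ i ∈ b, (2:ℕ)^i < 2^n := sum_two_pow_lt n b hblt
      omega
    by_cases hn : n ∈ s
    · have hnt : n ∈ t := key s t hs ht heq hn
      have hes : ∑ i ∈ s, (2:ℕ)^i = 2^n + ∑ i ∈ s.erase n, 2^i :=
        (Finset.add_sum_erase s _ hn).symm
      have het : ∑ i ∈ t, (2:ℕ)^i = 2^n + ∑ i ∈ t.erase n, 2^i :=
        (Finset.add_sum_erase t _ hnt).symm
      have herase : s.erase n = t.erase n := by
        apply ih
        · intro i hi
          have h1 := Finset.mem_erase.mp hi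
          have := hs i h1.2
          omega
        · intro i hi
          have h1 := Finset.mem_erase.mp hi
          have := ht i h1.2
          omega
        · omega
      ext a
      by_cases han : a = n
      · subst han; simp [hn, hnt]
      · constructor
        · intro ha
          have : a ∈ s.erase n := Finset.mem_erase.mpr ⟨han, ha⟩
          exact (Finset.mem_erase.mp (herase ▸ this)).2
        · intro ha
          have : a ∈ t.erase n := Finset.mem_erase.mpr ⟨han, ha⟩
          exact (Finset.mem_erase.mp (herase ▸ this : a ∈ s.erase n)).2
    · have hnt : n ∉ t := fun h => hn (key t s ht hs heq.symm h)
      apply ih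
      · intro i hi
        have := hs i hi
        rcases Nat.lt_succ_iff_lt_or_eq.mp this with h | h
        · exact h
        · exact absurd (h ▸ hi) hn
      · intro i hi
        have := ht i hi
        rcases Nat.lt_succ_iff_lt_or_eq.mp this with h | h
        · exact h
        · exact absurd (h ▸ hi) hnt
      · exact heq

lemma two_pow_finset_inj_real (s t : Finset ℕ)
    (h : ∑ i ∈ s, (2:ℝ)^i = ∑ i ∈ t, (2:ℝ)^i) : s = t := by
  have hnat : ∑ i ∈ s, (2:ℕ)^i = ∑ i ∈ t, (2:ℕ)^i := by
    have hs : ((∑ i ∈ s, (2:ℕ)^i : ℕ) : ℝ) = ∑ i ∈ s, (2:ℝ)^i := by push_cast; ring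
    have ht : ((∑ i ∈ t, (2:ℕ)^i : ℕ) : ℝ) = ∑ i ∈ t, (2:ℝ)^i := by push_cast; ring
    exact_mod_cast hs.trans (h.trans ht.symm)
  set N := (s ∪ t).sup id + 1 with hN
  apply two_pow_finset_inj_nat N
  · intro i hi
    have : i ≤ (s ∪ t).sup id := Finset.le_sup (f := id) (Finset.mem_union_left t hi)
    omega
  · intro i hi
    have : i ≤ (s ∪ t).sup id := Finset.le_sup (f := id) (Finset.mem_union_right s hi)
    omega
  · exact hnat

/-- From a Nodup list of naturals, the sum of 2^i determines the finset. -/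
lemma two_pow_list_inj (la lb : List ℕ) (ha : la.Nodup) (hb : lb.Nodup)
    (h : (la.map (fun n => (2:ℝ)^n)).sum = (lb.map (fun n => (2:ℝ)^n)).sum) :
    la.toFinset = lb.toFinset := by
  apply two_pow_finset_inj_real
  rw [List.sum_toFinset _ ha, List.sum_toFinset _ hb]
  exact h

end SPX
namespace SPX

lemma lifting {V E : Type} [DecidableEq V] [DecidableEq E]
    (G : Dgraph V E) (r : V) (EP : Finset E) (c p : E → ℝ) (idx : E → ℕ)
    (k : ℕ) (pe : Fin k → E) (hpe_inj : Function.Injective pe) (hpe_mem : ∀ i, pe i ∈ EP)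
    (dInf : V → V → ℝ)
    (hd2 : ∀ u v, Reaches G EP u v →
      ∃ π, IsWalk G u v π ∧ (∀ e ∈ π, e ∉ EP) ∧ wval c π = dInf u v)
    (cM pM : Fin k ⊕ (V × V) → ℝ)
    (hcM : ∀ q : V × V, cM (.inr q) = dInf q.1 q.2)
    (hpM : ∀ i : Fin k, pM (.inl i) = p (pe i))
    (EPM : Finset (Fin k ⊕ (V × V)))
    (hEPM : ∀ e, e ∈ EPM ↔ ∃ i : Fin k, e = .inl i)
    (idxM : Fin k ⊕ (V × V) → ℕ)
    (hidxM : ∀ i : Fin k, idxM (.inl i) = idx (pe i)) :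
    ∀ (σ : List (Fin k ⊕ (V × V))) (u x : V),
      IsWalk (modelG G k pe) u x σ → (∀ e ∈ σ, allowedM G EP r k pe e) →
      ∃ W, IsWalk G u x W ∧
        wval (wp c p EP) W = wval (wp cM pM EPM) σ ∧
        pval p EP W = pval pM EPM σ ∧
        chival EP idx W = chival EPM idxM σ ∧
        (∀ j : Fin k, pe j ∈ W ↔ Sum.inl j ∈ σ) := by
  intro σ
  induction σ with
  | nil =>
    intro u x hw _
    exact ⟨[], hw, by simp [wval], by simp [pval], by simp [chival], by simp⟩
  | cons e es ih =>
    intro u x hw hallow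
    obtain ⟨hsrc, hw2⟩ : (modelG G k pe).src e = u ∧
        IsWalk (modelG G k pe) ((modelG G k pe).tgt e) x es := hw
    obtain ⟨W', hW'walk, hW'w, hW'p, hW'c, hW'mem⟩ :=
      ih _ x hw2 (fun a ha => hallow a (by simp [ha]))
    match e with
    | .inl i =>
      refine ⟨pe i :: W', ⟨hsrc, ?_⟩, ?_, ?_, ?_, ?_⟩
      · exact hW'walk
      · rw [wval_cons, wval_cons, hW'w]
        have h1 : wp c p EP (pe i) = p (pe i) := by simp [wp, hpe_mem i]
        have h2 : wp cM pM EPM (Sum.inl i) = pM (Sum.inl i) := by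
          simp [wp, (hEPM (Sum.inl i)).mpr ⟨i, rfl⟩]
        rw [h1, h2, hpM i]
      · rw [pval_cons, pval_cons, hW'p]
        simp [hpe_mem i, (hEPM (Sum.inl i)).mpr ⟨i, rfl⟩, hpM i]
      · rw [chival_cons, chival_cons, hW'c]
        simp [hpe_mem i, (hEPM (Sum.inl i)).mpr ⟨i, rfl⟩, hidxM i]
      · intro j
        simp only [List.mem_cons]
        constructor
        · rintro (h | h)
          · left
            rw [hpe_inj h]
          · right; exact (hW'mem j).mp h
        · rintro (h | h)
          · left
            have : j = i := by injection h
            rw [this]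
          · right; exact (hW'mem j).mpr h
    | .inr q =>
      have hreach : Reaches G EP q.1 q.2 := (hallow (.inr q) (by simp)).1
      obtain ⟨seg, hsegwalk, hsegEP, hsegw⟩ := hd2 q.1 q.2 hreach
      have hsrc' : q.1 = u := hsrc
      have htgt : (modelG G k pe).tgt (Sum.inr q) = q.2 := rfl
      refine ⟨seg ++ W', ?_, ?_, ?_, ?_, ?_⟩
      · apply (isWalk_append G u x seg W').mpr
        exact ⟨q.2, hsrc' ▸ hsegwalk, htgt ▸ hW'walk⟩
      · rw [wval_append, hW'w, wval_cons]
        have h1 : wval (wp c p EP) seg = wval c seg :=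
          wval_congr _ _ seg (fun a ha => by simp [wp, hsegEP a ha])
        have h2 : wp cM pM EPM (Sum.inr q) = cM (Sum.inr q) := by
          have : Sum.inr q ∉ EPM := by
            intro hmem
            obtain ⟨i, hi⟩ := (hEPM _).mp hmem
            exact absurd hi (by simp)
          simp [wp, this]
        rw [h1, hsegw, h2, hcM q]
      · rw [pval_append, hW'p, pval_cons]
        have : Sum.inr q ∉ EPM := by
          intro hmem
          obtain ⟨i, hi⟩ := (hEPM _).mp hmem
          exact absurd hi (by simp)
        simp [pval_eq_zero p EP seg hsegEP, this]
      · rw [chival_append, hW'c, chival_cons]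
        have : Sum.inr q ∉ EPM := by
          intro hmem
          obtain ⟨i, hi⟩ := (hEPM _).mp hmem
          exact absurd hi (by simp)
        simp [chival_eq_zero EP idx seg hsegEP, this]
      · intro j
        simp only [List.mem_append, List.mem_cons]
        constructor
        · rintro (h | h)
          · exact absurd (hpe_mem j) (hsegEP _ h)
          · right; exact (hW'mem j).mp h
        · rintro (h | h)
          · exact absurd h (by simp)
          · right; exact (hW'mem j).mpr h

end SPX
namespace SPX

lemma projection {V E : Type} [DecidableEq V] [DecidableEq E]
    (G : Dgraph V E) (r : V) (EP : Finset E) (c p : E → ℝ) (idx : E → ℕ)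
    (k : ℕ) (pe : Fin k → E) (hpe_inj : Function.Injective pe)
    (hpe_mem : ∀ i, pe i ∈ EP) (hpe_surj : ∀ e ∈ EP, ∃ i, pe i = e)
    (dInf : V → V → ℝ)
    (hd1 : ∀ u v π, IsWalk G u v π → (∀ e ∈ π, e ∉ EP) → dInf u v ≤ wval c π)
    (cM pM : Fin k ⊕ (V × V) → ℝ)
    (hcM : ∀ q : V × V, cM (.inr q) = dInf q.1 q.2)
    (hpM : ∀ i : Fin k, pM (.inl i) = p (pe i))
    (EPM : Finset (Fin k ⊕ (V × V)))
    (hEPM : ∀ e, e ∈ EPM ↔ ∃ i : Fin k, e = .inl i)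
    (idxM : Fin k ⊕ (V × V) → ℕ)
    (hidxM : ∀ i : Fin k, idxM (.inl i) = idx (pe i))
    (x : V) (i0 : Fin k) (hx : x = G.src (pe i0) ∨ x = G.tgt (pe i0)) :
    ∀ (n : ℕ) (π : List E), π.length ≤ n → ∀ (u : V) (ctx : Option (Fin k)),
      IsWalk G u x π → π.Nodup →
      (ctx = none → u = r) →
      (∀ i', ctx = some i' → u = G.tgt (pe i') ∧ pe i' ∉ π) →
      (∃ σ, IsWalk (modelG G k pe) u x σ ∧ (∀ e ∈ σ, allowedM G EP r k pe e) ∧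
        wval (wp cM pM EPM) σ ≤ wval (wp c p EP) π ∧
        pval pM EPM σ = pval p EP π ∧
        chival EPM idxM σ = chival EP idx π ∧
        (∀ j : Fin k, Sum.inl j ∈ σ ↔ pe j ∈ π)) ∨
      (∃ (π₀ : List E) (m : Fin k) (seg : List E),
          π = π₀ ++ (pe m :: seg) ∧ seg ≠ [] ∧ (∀ e ∈ seg, e ∉ EP) ∧
          (∀ j : Fin k, (x = G.src (pe j) ∨ x = G.tgt (pe j)) → j = m)) ∨
      (∃ i' : Fin k, ctx = some i' ∧ (∀ e ∈ π, e ∉ EP) ∧ π ≠ [] ∧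
          ∀ j : Fin k, (x = G.src (pe j) ∨ x = G.tgt (pe j)) → j = i') := by
  have hinrEPM : ∀ q : V × V, Sum.inr q ∉ EPM := by
    intro q hmem
    obtain ⟨i, hi⟩ := (hEPM _).mp hmem
    exact absurd hi (by simp)
  have hinlEPM : ∀ i : Fin k, Sum.inl i ∈ EPM := fun i => (hEPM _).mpr ⟨i, rfl⟩
  intro n
  induction n with
  | zero =>
    intro π hlen u ctx hwalk hnd hctxn hctxs
    have : π = [] := List.length_eq_zero_iff.mp (Nat.le_zero.mp hlen)
    subst this
    left
    refine ⟨[], hwalk, by simp, by simp [wval], by simp [pval], by simp [chival], by simp⟩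
  | succ n ih =>
    intro π hlen u ctx hwalk hnd hctxn hctxs
    by_cases hfree : ∀ e ∈ π, e ∉ EP
    · -- base case: no priceable edges in π
      rcases List.eq_nil_or_concat π with rfl | hne
      · left
        exact ⟨[], hwalk, by simp, by simp [wval], by simp [pval], by simp [chival], by simp⟩
      · have hπne : π ≠ [] := by rcases hne with ⟨a, b, rfl⟩; simp
        have hreach : Reaches G EP u x := ⟨π, hwalk, hfree⟩
        have hwbound : wval (wp cM pM EPM) [Sum.inr (u, x)] ≤ wval (wp c p EP) π := by
          rw [wval_cons, wval_nil]
          have h1 : wp cM pM EPM (Sum.inr (u, x)) = dInf u x := by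
            simp [wp, hinrEPM (u, x), hcM (u, x)]
          have h2 : wval (wp c p EP) π = wval c π :=
            wval_congr _ _ π (fun a ha => by simp [wp, hfree a ha])
          rw [h1, h2]
          have := hd1 u x π hwalk hfree
          linarith
        have hwalkσ : IsWalk (modelG G k pe) u x [Sum.inr (u, x)] := ⟨rfl, rfl⟩
        have hpv : pval pM EPM [Sum.inr (u, x)] = pval p EP π := by
          rw [pval_eq_zero pM EPM _ (by simpa using hinrEPM (u,x)),
            pval_eq_zero p EP π hfree]
        have hcv : chival EPM idxM [Sum.inr (u, x)] = chival EP idx π := by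
          rw [chival_eq_zero EPM idxM _ (by simpa using hinrEPM (u,x)),
            chival_eq_zero EP idx π hfree]
        have hmemσ : ∀ j : Fin k, Sum.inl j ∈ [Sum.inr (u, x)] ↔ pe j ∈ π := by
          intro j
          simp only [List.mem_singleton]
          constructor
          · intro h; exact absurd h (by simp)
          · intro h; exact absurd (hpe_mem j) (hfree _ h)
        match ctx, hctxn, hctxs with
        | none, hctxn, _ =>
          left
          have hur : u = r := hctxn rfl
          refine ⟨[Sum.inr (u, x)], hwalkσ, ?_, hwbound, hpv, hcv, hmemσ⟩
          intro e he
          simp only [List.mem_singleton] at he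
          subst he
          exact ⟨hreach, Or.inl ⟨hur, ⟨i0, hx⟩⟩⟩
        | some i', _, hctxs =>
          obtain ⟨hu, _⟩ := hctxs i' rfl
          by_cases hj : ∃ j : Fin k, (x = G.src (pe j) ∨ x = G.tgt (pe j)) ∧ j ≠ i'
          · left
            obtain ⟨j, hjx, hjne⟩ := hj
            refine ⟨[Sum.inr (u, x)], hwalkσ, ?_, hwbound, hpv, hcv, hmemσ⟩
            intro e he
            simp only [List.mem_singleton] at he
            subst he
            exact ⟨hreach, Or.inr ⟨i', j, fun h => hjne h.symm, hu, hjx⟩⟩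
          · right; right
            push_neg at hj
            exact ⟨i', rfl, hfree, hπne, fun j hjx => hj j hjx⟩
    · -- recursive case: π contains a priceable edge
      push_neg at hfree
      obtain ⟨e0, he0π, he0EP⟩ := hfree
      obtain ⟨seg, e, rest, rfl, hsegEP, heEP⟩ :=
        split_first_priceable EP π ⟨e0, he0π, he0EP⟩
      obtain ⟨m, rfl⟩ := hpe_surj e heEP
      -- walk decomposition
      obtain ⟨v₁, hwseg, hwrest0⟩ := (isWalk_append G u x seg _).mp hwalk
      obtain ⟨hsrcm, hwrest⟩ : G.src (pe m) = v₁ ∧ IsWalk G (G.tgt (pe m)) x rest := hwrest0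
      have hndrest : rest.Nodup := by
        have := (List.nodup_append.mp hnd).2.1
        exact (List.nodup_cons.mp this).2
      have hmrest : pe m ∉ rest := by
        have := (List.nodup_append.mp hnd).2.1
        exact (List.nodup_cons.mp this).1
      have hlenrest : rest.length ≤ n := by
        have : (seg ++ (pe m :: rest)).length ≤ n + 1 := hlen
        simp [List.length_append] at this
        omega
      have := ih rest hlenrest (G.tgt (pe m)) (some m) hwrest hndrest
        (by intro h; exact absurd h (by simp))
        (by intro i' hi'; injection hi' with hi''; subst hi''; exact ⟨rfl, hmrest⟩)
      rcases this with ⟨σ', hσ'walk, hσ'allow, hσ'w, hσ'p, hσ'c, hσ'mem⟩ | hesc | hesc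
      · -- build σ
        left
        -- weight of the pe m edge
        have hwpm : wp c p EP (pe m) = p (pe m) := by simp [wp, hpe_mem m]
        have hwpMm : wp cM pM EPM (Sum.inl m) = p (pe m) := by
          simp [wp, hinlEPM m, hpM m]
        have hsegwp : wval (wp c p EP) seg = wval c seg :=
          wval_congr _ _ seg (fun a ha => by simp [wp, hsegEP a ha])
        have hsegp : pval p EP seg = 0 := pval_eq_zero p EP seg hsegEP
        have hsegc : chival EP idx seg = 0 := chival_eq_zero EP idx seg hsegEP
        rcases List.eq_nil_or_concat seg with rfl | hsegne'
        · -- seg empty: u = src (pe m)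
          have husrc : u = v₁ := hwseg
          refine ⟨Sum.inl m :: σ',
            ⟨show G.src (pe m) = u from hsrcm.trans husrc.symm, hσ'walk⟩, ?_, ?_, ?_, ?_, ?_⟩
          · intro a ha
            rcases List.mem_cons.mp ha with h1 | h1
            · subst h1; trivial
            · exact hσ'allow a h1
          · rw [wval_cons]
            simp only [List.nil_append, wval_cons]
            rw [hwpMm, hwpm]
            linarith
          · rw [pval_cons]
            simp only [List.nil_append]
            rw [pval_cons]
            simp [hinlEPM m, hpe_mem m, hpM m, hσ'p]
          · rw [chival_cons]
            simp only [List.nil_append]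
            rw [chival_cons]
            simp [hinlEPM m, hpe_mem m, hidxM m, hσ'c]
          · intro j
            simp only [List.mem_cons, List.nil_append]
            constructor
            · rintro (h | h)
              · left; rw [Sum.inl.inj h]
              · right; exact (hσ'mem j).mp h
            · rintro (h | h)
              · left; rw [hpe_inj h]
              · right; exact (hσ'mem j).mpr h
        · -- seg nonempty: aux edge
          have hsegne : seg ≠ [] := by rcases hsegne' with ⟨a, b, rfl⟩; simp
          have hreach : Reaches G EP u v₁ := ⟨seg, hwseg, hsegEP⟩
          have hallow2 : allowedM G EP r k pe (Sum.inr (u, v₁)) := by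
            refine ⟨hreach, ?_⟩
            match ctx, hctxn, hctxs with
            | none, hctxn, _ =>
              exact Or.inl ⟨hctxn rfl, ⟨m, Or.inl hsrcm.symm⟩⟩
            | some i', _, hctxs =>
              obtain ⟨hu, hi'π⟩ := hctxs i' rfl
              have hi'm : i' ≠ m := by
                intro h
                subst h
                exact hi'π (by simp)
              exact Or.inr ⟨i', m, hi'm, hu, Or.inl hsrcm.symm⟩
          refine ⟨Sum.inr (u, v₁) :: Sum.inl m :: σ',
            ⟨rfl, by exact ⟨hsrcm, hσ'walk⟩⟩, ?_, ?_, ?_, ?_, ?_⟩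
          · intro a ha
            rcases List.mem_cons.mp ha with h1 | h1
            · subst h1; exact hallow2
            rcases List.mem_cons.mp h1 with h2 | h2
            · subst h2; trivial
            · exact hσ'allow a h2
          · rw [wval_cons, wval_cons, wval_append, wval_cons]
            have h1 : wp cM pM EPM (Sum.inr (u, v₁)) = dInf u v₁ := by
              simp [wp, hinrEPM (u, v₁), hcM (u, v₁)]
            have h2 : dInf u v₁ ≤ wval c seg := hd1 u v₁ seg hwseg hsegEP
            rw [h1, hwpMm, hwpm, hsegwp]
            linarith
          · rw [pval_cons, pval_cons, pval_append, pval_cons]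
            simp [hinrEPM (u, v₁), hinlEPM m, hpe_mem m, hpM m, hσ'p, hsegp]
          · rw [chival_cons, chival_cons, chival_append, chival_cons]
            simp [hinrEPM (u, v₁), hinlEPM m, hpe_mem m, hidxM m, hσ'c, hsegc]
          · intro j
            simp only [List.mem_cons, List.mem_append]
            constructor
            · rintro (h | h | h)
              · exact absurd h (by simp)
              · right; left; rw [Sum.inl.inj h]
              · right; right; exact (hσ'mem j).mp h
            · rintro (h | h | h)
              · exact absurd (hpe_mem j) (hsegEP _ h)
              · right; left; rw [hpe_inj h]
              · right; right; exact (hσ'mem j).mpr h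
      · -- middle escape from rest
        right; left
        obtain ⟨π₀, m', seg', hrest, hne, hsegEP', hjall⟩ := hesc
        refine ⟨seg ++ (pe m :: π₀), m', seg', ?_, hne, hsegEP', hjall⟩
        rw [hrest]
        simp
      · -- right escape from rest
        right; left
        obtain ⟨i', hi', hrestfree, hrestne, hjall⟩ := hesc
        have : i' = m := by injection hi' with h; exact h.symm
        subst this
        exact ⟨seg, i', rest, rfl, hrestne, hrestfree, hjall⟩

end SPX

open SPX

/-- Lemma (model graph): let `T` be a `ŵ_p`-shortest path tree in `G` and let `Tm` be a
`ŵ_p`-shortest path tree in the model graph `G̃` (whose non-priceable edges are weighted by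
the distance `d_∞` in `G − E_P`, and whose paths are restricted to allowed edges).  Then for
every priceable edge `e_i` and endpoint `x ∈ {s_i, t_i}`, the priceable edges on the
`r`-to-`x` path of `T` coincide with those on the `r`-to-`x` path of `Tm`; consequently `T`
and `Tm` have the same reduced tree (the descendant relations among priceable edges agree). -/
theorem stmt_13 {V E : Type} [DecidableEq V] [DecidableEq E]
    (G : Dgraph V E) (r : V) (EP : Finset E) (c p : E → ℝ) (idx : E → ℕ)
    (hc : ∀ e ∉ EP, 0 < c e) (hp : ∀ e ∈ EP, 0 < p e)
    (hidx : ∀ e ∈ EP, ∀ e' ∈ EP, idx e = idx e' → e = e')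
    (k : ℕ) (pe : Fin k → E) (hpe_inj : Function.Injective pe)
    (hpe_mem : ∀ i, pe i ∈ EP) (hpe_surj : ∀ e ∈ EP, ∃ i, pe i = e)
    (dInf : V → V → ℝ)
    (hd1 : ∀ u v π, IsWalk G u v π → (∀ e ∈ π, e ∉ EP) → dInf u v ≤ wval c π)
    (hd2 : ∀ u v, Reaches G EP u v →
      ∃ π, IsWalk G u v π ∧ (∀ e ∈ π, e ∉ EP) ∧ wval c π = dInf u v)
    (T : V → List E) (hT : IsHatSPT G r c p EP idx T)
    (cM pM : Fin k ⊕ (V × V) → ℝ)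
    (hcM : ∀ q : V × V, cM (.inr q) = dInf q.1 q.2)
    (hpM : ∀ i : Fin k, pM (.inl i) = p (pe i))
    (EPM : Finset (Fin k ⊕ (V × V)))
    (hEPM : ∀ e, e ∈ EPM ↔ ∃ i : Fin k, e = .inl i)
    (idxM : Fin k ⊕ (V × V) → ℕ)
    (hidxM : ∀ i : Fin k, idxM (.inl i) = idx (pe i))
    (Tm : V → List (Fin k ⊕ (V × V)))
    (hTm : ∀ x : V,
      (x = r ∨ ∃ i : Fin k, x = G.src (pe i) ∨ x = G.tgt (pe i)) →
        IsPath (modelG G k pe) r x (Tm x) ∧ (∀ e ∈ Tm x, allowedM G EP r k pe e) ∧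
          ∀ π, IsPath (modelG G k pe) r x π → (∀ e ∈ π, allowedM G EP r k pe e) →
            lexLe (hatw cM pM EPM idxM (Tm x)) (hatw cM pM EPM idxM π)) :
    (∀ i : Fin k, ∀ x : V, (x = G.src (pe i) ∨ x = G.tgt (pe i)) →
        ∀ j : Fin k, pe j ∈ T x ↔ Sum.inl j ∈ Tm x) ∧
      ∀ i j : Fin k,
        ((pe j ∈ T (G.src (pe i)) ∧ pe j ∈ T (G.tgt (pe i))) ↔
          (Sum.inl j ∈ Tm (G.src (pe i)) ∧ Sum.inl j ∈ Tm (G.tgt (pe i)))) := by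
  have hwpG_pos : ∀ e : E, 0 < wp c p EP e := by
    intro e
    by_cases h : e ∈ EP
    · simpa [wp, h] using hp e h
    · simpa [wp, h] using hc e h
  have hcore : ∀ i : Fin k, ∀ x : V, (x = G.src (pe i) ∨ x = G.tgt (pe i)) →
      ∀ j : Fin k, pe j ∈ T x ↔ Sum.inl j ∈ Tm x := by
    intro i x hx
    obtain ⟨⟨hwalkA, hndA⟩, hminA⟩ := hT x
    obtain ⟨⟨hwalkB, hndB⟩, hallowB, hminB⟩ := hTm x (Or.inr ⟨i, hx⟩)
    -- Projection of T x to the model graph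
    have hproj := projection G r EP c p idx k pe hpe_inj hpe_mem hpe_surj dInf hd1
      cM pM hcM hpM EPM hEPM idxM hidxM x i hx (T x).length (T x) le_rfl r none
      hwalkA hndA (fun _ => rfl) (fun i' h => by cases h)
    rcases hproj with ⟨σA, hσAwalk, hσAallow, hσAw, hσAp, hσAc, _⟩ |
        ⟨π₀, m, seg, hdec, hsegne, hsegEP, hjall⟩ | ⟨i', hi', _⟩
    · -- main case
      -- dedup the projected walk
      have hσA0 : ∀ e ∈ σA, 0 ≤ wp cM pM EPM e := by
        intro e he
        match e with
        | .inl j =>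
          have : Sum.inl j ∈ EPM := (hEPM _).mpr ⟨j, rfl⟩
          simp only [wp, this, if_pos]
          exact le_of_lt ((hpM j) ▸ hp (pe j) (hpe_mem j))
        | .inr q =>
          have hnot : Sum.inr q ∉ EPM := by
            intro hmem; obtain ⟨i', hi'⟩ := (hEPM _).mp hmem; exact absurd hi' (by simp)
          have hreach : Reaches G EP q.1 q.2 := (hσAallow _ he).1
          obtain ⟨w1, hw1, hw1EP, hw1v⟩ := hd2 q.1 q.2 hreach
          have : 0 ≤ dInf q.1 q.2 := by
            rw [← hw1v]
            exact wval_nonneg c w1 (fun e' he' => le_of_lt (hc e' (hw1EP e' he')))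
          simpa [wp, hnot, hcM q] using this
      have hσAP : ∀ e ∈ σA, e ∈ EPM → 0 < wp cM pM EPM e := by
        intro e _ heP
        obtain ⟨j, rfl⟩ := (hEPM _).mp heP
        simp only [wp, heP, if_pos]
        exact (hpM j) ▸ hp (pe j) (hpe_mem j)
      obtain ⟨σ', ⟨hσ'walk, hσ'nd⟩, hσ'sub, hσ'le, hσ'disj⟩ :=
        dedup_walk (modelG G k pe) (wp cM pM EPM) pM EPM idxM σA.length σA le_rfl
          r x hσAwalk hσA0 hσAP
      have hminBσ' := hminB σ' ⟨hσ'walk, hσ'nd⟩ (fun e he => hσAallow e (hσ'sub e he))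
      -- Lifting of Tm x to G
      obtain ⟨W, hWwalk, hWw, hWp, hWc, _⟩ :=
        lifting G r EP c p idx k pe hpe_inj hpe_mem dInf hd2 cM pM hcM hpM EPM hEPM
          idxM hidxM (Tm x) r x hwalkB hallowB
      obtain ⟨P, ⟨hPwalk, hPnd⟩, hPsub, hPle, hPdisj⟩ :=
        dedup_walk G (wp c p EP) p EP idx W.length W le_rfl r x hWwalk
          (fun e _ => le_of_lt (hwpG_pos e)) (fun e _ _ => hwpG_pos e)
      have hminAP := hminA P ⟨hPwalk, hPnd⟩
      -- first components
      have hf1 : wval (wp cM pM EPM) (Tm x) ≤ wval (wp cM pM EPM) σ' :=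
        lexLe_fst hminBσ'
      have hf2 : wval (wp c p EP) (T x) ≤ wval (wp c p EP) P := lexLe_fst hminAP
      have heq1 : wval (wp c p EP) (T x) = wval (wp cM pM EPM) (Tm x) := by
        rw [hWw] at hPle
        linarith
      have heqσ' : wval (wp cM pM EPM) σ' = wval (wp cM pM EPM) (Tm x) := by
        rw [hWw] at hPle; linarith
      have heqP : wval (wp c p EP) P = wval (wp c p EP) (T x) := by
        rw [hWw] at hPle; linarith
      -- resolve the disjunctions
      have hσ'pc : pval pM EPM σ' = pval pM EPM σA ∧
          chival EPM idxM σ' = chival EPM idxM σA := by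
        rcases hσ'disj with h | h
        · exfalso
          rw [hWw] at hPle
          linarith
        · exact h
      have hPpc : pval p EP P = pval p EP W ∧ chival EP idx P = chival EP idx W := by
        rcases hPdisj with h | h
        · exfalso
          rw [hWw] at hPle
          linarith
        · exact h
      -- second/third components
      have hr1 := lexLe_rest hminBσ' (by simpa [hatw] using heqσ'.symm)
      have hr2 := lexLe_rest hminAP (by simpa [hatw] using heqP.symm)
      simp only [hatw] at hr1 hr2
      have hpA : pval pM EPM σ' = pval p EP (T x) := by rw [hσ'pc.1, hσAp]
      have hcA : chival EPM idxM σ' = chival EP idx (T x) := by rw [hσ'pc.2, hσAc]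
      have hpB : pval p EP P = pval pM EPM (Tm x) := by rw [hPpc.1, hWp]
      have hcB : chival EP idx P = chival EPM idxM (Tm x) := by rw [hPpc.2, hWc]
      rw [hpA, hcA] at hr1
      rw [hpB, hcB] at hr2
      have hchi : chival EP idx (T x) = chival EPM idxM (Tm x) := by
        rcases hr1 with h1 | ⟨h1, h1'⟩ <;> rcases hr2 with h2 | ⟨h2, h2'⟩ <;> linarith
      -- from equal chi values to equal priceable edge sets
      clear hr1 hr2 hminBσ' hminAP hσ'disj hPdisj
      set lA := (T x).filter (· ∈ EP) with hlA
      set lB := (Tm x).filter (· ∈ EPM) with hlB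
      have hndlA : lA.Nodup := hndA.filter _
      have hndlB : lB.Nodup := hndB.filter _
      have hmemlA : ∀ e ∈ lA, e ∈ EP := by
        intro e he
        have := List.mem_filter.mp he
        simpa using this.2
      have hmemlB : ∀ e ∈ lB, e ∈ EPM := by
        intro e he
        have := List.mem_filter.mp he
        simpa using this.2
      have hndeA : (lA.map idx).Nodup := by
        apply List.Nodup.map_on _ hndlA
        intro e he e' he' hee
        exact hidx e (hmemlA e he) e' (hmemlA e' he') hee
      have hndeB : (lB.map idxM).Nodup := by
        apply List.Nodup.map_on _ hndlB
        intro e he e' he' hee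
        obtain ⟨j, rfl⟩ := (hEPM _).mp (hmemlB e he)
        obtain ⟨j', rfl⟩ := (hEPM _).mp (hmemlB e' he')
        rw [hidxM, hidxM] at hee
        rw [hpe_inj (hidx _ (hpe_mem j) _ (hpe_mem j') hee)]
      have hsums : ((lA.map idx).map (fun n => (2:ℝ)^n)).sum =
          ((lB.map idxM).map (fun n => (2:ℝ)^n)).sum := by
        have e1 : (lA.map idx).map (fun n => (2:ℝ)^n) = lA.map (fun e => (2:ℝ)^ idx e) := by
          rw [List.map_map]; rfl
        have e2 : (lB.map idxM).map (fun n => (2:ℝ)^n) = lB.map (fun e => (2:ℝ)^ idxM e) := by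
          rw [List.map_map]; rfl
        rw [e1, e2]
        exact hchi
      have hfs := two_pow_list_inj (lA.map idx) (lB.map idxM) hndeA hndeB hsums
      intro j
      constructor
      · intro hj
        have hjlA : pe j ∈ lA := by
          rw [hlA]
          simp [List.mem_filter, hj, hpe_mem j]
        have : idx (pe j) ∈ (lA.map idx).toFinset := by
          simp only [List.mem_toFinset, List.mem_map]
          exact ⟨pe j, hjlA, rfl⟩
        rw [hfs] at this
        simp only [List.mem_toFinset, List.mem_map] at this
        obtain ⟨b, hb, hbv⟩ := this
        obtain ⟨j', rfl⟩ := (hEPM _).mp (hmemlB b hb)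
        rw [hidxM] at hbv
        have : pe j' = pe j := hidx _ (hpe_mem j') _ (hpe_mem j) hbv
        rw [hpe_inj this] at hb
        exact (List.mem_filter.mp hb).1
      · intro hj
        have hjlB : Sum.inl j ∈ lB := by
          rw [hlB]
          simp [List.mem_filter, hj, (hEPM (Sum.inl j)).mpr ⟨j, rfl⟩]
        have : idxM (Sum.inl j) ∈ (lB.map idxM).toFinset := by
          simp only [List.mem_toFinset, List.mem_map]
          exact ⟨Sum.inl j, hjlB, rfl⟩
        rw [← hfs] at this
        simp only [List.mem_toFinset, List.mem_map] at this
        obtain ⟨b, hb, hbv⟩ := this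
        rw [hidxM] at hbv
        have : b = pe j := hidx _ (hmemlA b hb) _ (hpe_mem j) hbv
        rw [← this]
        exact (List.mem_filter.mp hb).1
    · -- BadEnd escape: contradiction with minimality of T x
      exfalso
      have him : i = m := hjall i hx
      subst him
      rw [hdec] at hwalkA hndA
      obtain ⟨v₁, hwπ₀, hwrest⟩ := (isWalk_append G r x π₀ _).mp hwalkA
      obtain ⟨hsrcm, hwseg⟩ : G.src (pe i) = v₁ ∧ IsWalk G (G.tgt (pe i)) x seg := hwrest
      have hseg_pos : 0 < wval (wp c p EP) seg := by
        rcases seg with _ | ⟨e1, seg'⟩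
        · exact absurd rfl hsegne
        · exact wval_pos_of_mem _ _ (fun e' _ => le_of_lt (hwpG_pos e')) e1 (by simp)
            (hwpG_pos e1)
      rcases hx with hxs | hxt
      · -- x = src (pe i): drop pe i and seg
        have hwalk' : IsWalk G r x π₀ := by
          have : v₁ = x := by rw [← hsrcm, ← hxs]
          rw [← this]; exact hwπ₀
        have hnd' : π₀.Nodup := (List.nodup_append.mp hndA).1
        have hmin := hminA π₀ ⟨hwalk', hnd'⟩
        apply lexLe_not_lt_fst hmin
        show wval (wp c p EP) π₀ < wval (wp c p EP) (T x)
        rw [hdec, wval_append, wval_cons]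
        have : 0 < wp c p EP (pe i) := hwpG_pos (pe i)
        linarith
      · -- x = tgt (pe i): drop seg
        have hwalk' : IsWalk G r x (π₀ ++ [pe i]) := by
          apply (isWalk_append G r x π₀ [pe i]).mpr
          exact ⟨v₁, hwπ₀, hsrcm, hxt.symm⟩
        have hnd' : (π₀ ++ [pe i]).Nodup := by
          apply List.Nodup.sublist _ hndA
          exact (List.cons_sublist_cons.mpr (List.nil_sublist seg)).append_left π₀
        have hmin := hminA (π₀ ++ [pe i]) ⟨hwalk', hnd'⟩
        apply lexLe_not_lt_fst hmin
        show wval (wp c p EP) (π₀ ++ [pe i]) < wval (wp c p EP) (T x)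
        rw [hdec, wval_append, wval_cons, wval_append, wval_cons, wval_nil]
        linarith
    · exact absurd hi' (by simp)
  refine ⟨hcore, ?_⟩
  intro i j
  constructor
  · rintro ⟨h1, h2⟩
    exact ⟨(hcore i _ (Or.inl rfl) j).mp h1, (hcore i _ (Or.inr rfl) j).mp h2⟩
  · rintro ⟨h1, h2⟩
    exact ⟨(hcore i _ (Or.inl rfl) j).mpr h1, (hcore i _ (Or.inr rfl) j).mpr h2⟩
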